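/- arXiv:2309.15412 — 2 statements merged into one kernel-verified Lean document; each statement's English description precedes it below -/
import Mathlib

section
/- Fix the root system of sl_r with simple roots β_1, ..., β_{r-1}, fundamental weights ω_1, ..., ω_{r-1}, and ρ the sum of all fundamental weights. Let λ = Σ_j a_j ω_j be a dominant integral weight with a_j ≥ 0 and Σ_j j·a_j = n, where r > 2n. Then λ is singular at level 0: there exists a positive root β with (λ + ρ, β) divisible by r. Concretely, setting a = Σ_j a_j and β = β_1 + β_2 + ... + β_{r-a}, one has (λ + ρ, β) = r. -/
/-- For a dominant weight `λ = Σ a_j ω_j` of `sl_r` with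
`Σ j·a_j = n` and `r > 2n`, setting `a = Σ a_j` and `β = β_1 + ⋯ + β_{r-a}`,
the pairing `(λ+ρ, β) = Σ_{j=1}^{r-a} (a_j + 1)` equals `r`; in particular `λ`
is singular at level 0. -/
theorem stmt1 (r n : ℕ) (h : 2 * n < r) (a : ℕ → ℕ)
    (hsupp : ∀ j, (j = 0 ∨ r ≤ j) → a j = 0)
    (hn : ∑ j ∈ Finset.range r, j * a j = n) :
    ∑ j ∈ Finset.Icc 1 (r - ∑ j ∈ Finset.range r, a j), (a j + 1) = r := by
  set A := ∑ j ∈ Finset.range r, a j with hA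
  -- each term j * a j ≤ n
  have hterm : ∀ j ∈ Finset.range r, j * a j ≤ n := by
    intro j hj
    rw [← hn]
    exact Finset.single_le_sum (f := fun j => j * a j) (fun i _ => Nat.zero_le _) hj
  -- support is contained in Icc 1 n
  have hzero : ∀ j, n < j → a j = 0 := by
    intro j hj
    by_cases hjr : r ≤ j
    · exact hsupp j (Or.inr hjr)
    · by_contra hne
      have h1 : 1 ≤ a j := Nat.one_le_iff_ne_zero.mpr hne
      have : j ≤ j * a j := Nat.le_mul_of_pos_right j (Nat.lt_of_lt_of_le Nat.zero_lt_one h1)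
      have := le_trans this (hterm j (Finset.mem_range.mpr (lt_of_not_ge hjr)))
      omega
  -- A ≤ n
  have hAn : A ≤ n := by
    rw [hA, ← hn]
    apply Finset.sum_le_sum
    intro j hj
    rcases Nat.eq_zero_or_pos j with h0 | h1
    · simp [h0, hsupp 0 (Or.inl rfl)]
    · exact Nat.le_mul_of_pos_left (a j) h1
  have hnr : n < r := by omega
  have hnrA : n ≤ r - A := by omega
  -- sums over Icc 1 n, Icc 1 (r - A), range r of a all agree
  have key : ∀ s : Finset ℕ, Finset.Icc 1 n ⊆ s →
      ∑ j ∈ s, a j = ∑ j ∈ Finset.Icc 1 n, a j := by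
    intro s hs
    refine (Finset.sum_subset hs ?_).symm
    intro j _ hj
    simp only [Finset.mem_Icc, not_and_or, not_le] at hj
    rcases hj with hj | hj
    · exact hsupp j (Or.inl (by omega))
    · exact hzero j hj
  have h1 : ∑ j ∈ Finset.Icc 1 (r - A), a j = A := by
    rw [key _ (Finset.Icc_subset_Icc_right hnrA), hA,
      key (Finset.range r) (by intro j hj; simp only [Finset.mem_Icc] at hj
                               exact Finset.mem_range.mpr (by omega))]
  rw [Finset.sum_add_distrib, h1, Finset.sum_const, Nat.card_Icc]
  simp
  omega
end

section
/- Let g ≥ 2, r ≥ 2, and let a_1, ..., a_{r-1} ≥ 0 be integers with Σ a_j ≤ (r-1)(g-1) + 1. Then for every s with 1 ≤ s ≤ r-1, (Σ_j a_j)·((r-s)s + 1)/r ≤ (r-s)·s·(g-1) + 1. -/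
/-- For `g ≥ 2`, `r ≥ 2` and nonnegative integers `a_j` with
`Σ a_j ≤ (r-1)(g-1) + 1`, for every `1 ≤ s ≤ r-1` one has
`(Σ a_j)((r-s)s + 1)/r ≤ (r-s)s(g-1) + 1`. -/
theorem stmt16 (r g : ℕ) (hr : 2 ≤ r) (hg : 2 ≤ g) (a : ℕ → ℤ)
    (hpos : ∀ j ∈ Finset.Icc 1 (r - 1), 0 ≤ a j)
    (hsum : ∑ j ∈ Finset.Icc 1 (r - 1), a j
      ≤ ((r : ℤ) - 1) * ((g : ℤ) - 1) + 1) :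
    ∀ s : ℕ, 1 ≤ s → s ≤ r - 1 →
      ((∑ j ∈ Finset.Icc 1 (r - 1), a j : ℤ) : ℚ)
          * (((r : ℚ) - s) * s + 1) / (r : ℚ)
        ≤ ((r : ℚ) - s) * s * ((g : ℚ) - 1) + 1 := by
  intro s hs1 hs2
  have hA0 : (0 : ℤ) ≤ ∑ j ∈ Finset.Icc 1 (r - 1), a j :=
    Finset.sum_nonneg hpos
  have hA0' : (0 : ℚ) ≤ ((∑ j ∈ Finset.Icc 1 (r - 1), a j : ℤ) : ℚ) := by
    exact_mod_cast hA0
  have hAub : ((∑ j ∈ Finset.Icc 1 (r - 1), a j : ℤ) : ℚ)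
      ≤ ((r : ℚ) - 1) * ((g : ℚ) - 1) + 1 := by
    have h := (@Int.cast_le ℚ _ _ _).2 hsum
    push_cast at h ⊢
    linarith
  set A : ℚ := ((∑ j ∈ Finset.Icc 1 (r - 1), a j : ℤ) : ℚ) with hA
  have hrpos : (0 : ℚ) < (r : ℚ) := by positivity
  have hs1' : (1 : ℚ) ≤ (s : ℚ) := by exact_mod_cast hs1
  have hsr : (s : ℚ) + 1 ≤ (r : ℚ) := by
    have : s + 1 ≤ r := by omega
    exact_mod_cast this
  have hg' : (2 : ℚ) ≤ (g : ℚ) := by exact_mod_cast hg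
  rw [div_le_iff₀ hrpos]
  nlinarith [mul_nonneg (sub_nonneg.2 hs1') (by linarith : (0:ℚ) ≤ (r:ℚ) - (s:ℚ) - 1),
    mul_nonneg hA0' (by nlinarith : (0:ℚ) ≤ ((r:ℚ) - s) * s + 1),
    mul_nonneg (by linarith : (0:ℚ) ≤ (g:ℚ) - 2)
      (mul_nonneg (sub_nonneg.2 hs1') (by linarith : (0:ℚ) ≤ (r:ℚ) - (s:ℚ) - 1))]
end
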